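/- For the operators K_n and x ≥ 1/2, the second moment satisfies K_n(t²; x) = x² + (1/n)(1 + 2μ e_μ(−n r_n(x))/e_μ(n r_n(x))) x − (1/n²)(5/12 + μ e_μ(−n r_n(x))/e_μ(n r_n(x))). -/

import Mathlib

noncomputable section

/-- θ_k = 0 if k even, 1 if k odd. -/
def theta (k : ℕ) : ℝ := if Even k then 0 else 1

/-- Dunkl coefficients γ_μ(n). -/
def gammaD (mu : ℝ) (n : ℕ) : ℝ :=
  if Even n then
    2 ^ n * (Nat.factorial (n / 2)) * Real.Gamma ((n / 2 : ℕ) + mu + 1 / 2) / Real.Gamma (mu + 1 / 2)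
  else
    2 ^ n * (Nat.factorial (n / 2)) * Real.Gamma ((n / 2 : ℕ) + mu + 3 / 2) / Real.Gamma (mu + 1 / 2)

/-- Dunkl exponential e_μ(x) = Σ xⁿ/γ_μ(n). -/
def eD (mu x : ℝ) : ℝ := ∑' n : ℕ, x ^ n / gammaD mu n

/-- r_n(x) = x - 1/(2n). -/
def rn (n : ℕ) (x : ℝ) : ℝ := x - 1 / (2 * n)

/-- Modified Dunkl Szász–Mirakjan–Kantorovich operator K_n. -/
def Kn (mu : ℝ) (n : ℕ) (f : ℝ → ℝ) (x : ℝ) : ℝ :=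
  (n / eD mu (n * rn n x)) * ∑' k : ℕ, (n * rn n x) ^ k / gammaD mu k *
    ∫ t in (((k : ℝ) + 2 * mu * theta k) / n)..(((k : ℝ) + 1 + 2 * mu * theta k) / n), f t

/-- Stancu-type modified Dunkl Szász–Kantorovich operator K_n^*. -/
def KnStar (mu a b : ℝ) (n : ℕ) (f : ℝ → ℝ) (x : ℝ) : ℝ :=
  (n / eD mu (n * rn n x)) * ∑' k : ℕ, (n * rn n x) ^ k / gammaD mu k *
    ∫ t in (((k : ℝ) + 2 * mu * theta k) / n)..(((k : ℝ) + 1 + 2 * mu * theta k) / n),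
      f ((n * t + a) / (n + b))

/-- Dunkl Szász–Kantorovich–Stancu operator T_n^*. -/
def TnStar (mu a b : ℝ) (n : ℕ) (f : ℝ → ℝ) (x : ℝ) : ℝ :=
  (n / eD mu (n * x)) * ∑' k : ℕ, (n * x) ^ k / gammaD mu k *
    ∫ t in (((k : ℝ) + 2 * mu * theta k) / n)..(((k : ℝ) + 1 + 2 * mu * theta k) / n),
      f ((n * t + a) / (n + b))

/-- Modulus of continuity of f on [0,∞). -/
def modCont (f : ℝ → ℝ) (d : ℝ) : ℝ :=
  sSup {y | ∃ t s : ℝ, 0 ≤ t ∧ 0 ≤ s ∧ |t - s| ≤ d ∧ y = |f t - f s|}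

lemma theta_nonneg (k : ℕ) : 0 ≤ theta k := by
  unfold theta; split <;> norm_num

lemma theta_succ (k : ℕ) : theta (k + 1) = theta k + (-1) ^ k := by
  rcases Nat.even_or_odd k with h | h
  · simp [theta, Nat.even_add_one, h, h.neg_one_pow]
  · simp [theta, Nat.even_add_one, h, Nat.not_even_iff_odd.2 h, h.neg_one_pow]

lemma gammaD_zero (mu : ℝ) (hmu : 0 ≤ mu) : gammaD mu 0 = 1 := by
  have h : Real.Gamma (mu + 1/2) ≠ 0 := by
    have := Real.Gamma_pos_of_pos (by linarith : (0:ℝ) < mu + 1/2); linarith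
  simp only [gammaD, if_pos (Even.zero), pow_zero, Nat.zero_div, Nat.factorial_zero, Nat.cast_zero, Nat.cast_one, one_mul, zero_add]
  exact div_self h

lemma gammaD_succ (mu : ℝ) (hmu : 0 ≤ mu) (k : ℕ) :
    gammaD mu (k + 1) = ((k : ℝ) + 1 + 2 * mu * theta (k + 1)) * gammaD mu k := by
  rcases Nat.even_or_odd k with ⟨m, hm⟩ | ⟨m, hm⟩
  · subst hm
    have he : Even (m + m) := ⟨m, rfl⟩
    have ho : ¬ Even (m + m + 1) := by simp [Nat.even_add_one, he]
    have hd1 : (m + m) / 2 = m := by omega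
    have hd2 : (m + m + 1) / 2 = m := by omega
    have hG : Real.Gamma ((m:ℝ) + mu + 3/2) = ((m:ℝ) + mu + 1/2) * Real.Gamma ((m:ℝ) + mu + 1/2) := by
      have := Real.Gamma_add_one (s := (m:ℝ) + mu + 1/2) (by positivity)
      rw [show (m:ℝ) + mu + 3/2 = (m:ℝ) + mu + 1/2 + 1 by ring, this]
    simp only [gammaD, he, ho, if_true, if_false, hd1, hd2, theta, ho, if_false]
    rw [hG]
    push_cast
    ring
  · subst hm
    have ho : ¬ Even (2 * m + 1) := by simp [Nat.even_add_one]
    have he : Even (2 * m + 1 + 1) := by refine ⟨m + 1, by ring⟩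
    have hd1 : (2 * m + 1) / 2 = m := by omega
    have hd2 : (2 * m + 1 + 1) / 2 = m + 1 := by omega
    simp only [gammaD, he, ho, if_true, if_false, hd1, hd2, theta, he, if_true]
    have : ((m:ℝ) + 1) + mu + 1/2 = (m:ℝ) + mu + 3/2 := by ring
    push_cast
    rw [this, Nat.factorial_succ]
    push_cast
    ring

lemma gammaD_pos (mu : ℝ) (hmu : 0 ≤ mu) (k : ℕ) : 0 < gammaD mu k := by
  induction k with
  | zero => rw [gammaD_zero mu hmu]; norm_num
  | succ k ih =>
    rw [gammaD_succ mu hmu]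
    have := theta_nonneg (k + 1)
    have : (0:ℝ) < (k : ℝ) + 1 + 2 * mu * theta (k+1) := by positivity
    exact mul_pos this ih

lemma factorial_le_gammaD (mu : ℝ) (hmu : 0 ≤ mu) (k : ℕ) :
    (Nat.factorial k : ℝ) ≤ gammaD mu k := by
  induction k with
  | zero => rw [gammaD_zero mu hmu]; simp
  | succ k ih =>
    rw [gammaD_succ mu hmu, Nat.factorial_succ]
    push_cast
    have h1 : ((k:ℝ) + 1) ≤ (k : ℝ) + 1 + 2 * mu * theta (k+1) := by
      have := theta_nonneg (k + 1); nlinarith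
    have h2 : (0:ℝ) ≤ (Nat.factorial k : ℝ) := by positivity
    nlinarith [gammaD_pos mu hmu k, Nat.one_le_iff_ne_zero.2 (Nat.factorial_ne_zero k)]

lemma summable_eD (mu : ℝ) (hmu : 0 ≤ mu) (x : ℝ) :
    Summable (fun k => x ^ k / gammaD mu k) := by
  refine Summable.of_norm_bounded (Real.summable_pow_div_factorial |x|) ?_
  intro k
  rw [Real.norm_eq_abs, abs_div, abs_pow, abs_of_pos (gammaD_pos mu hmu k)]
  apply div_le_div_of_nonneg_left ?_ ?_ (factorial_le_gammaD mu hmu k)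
  · positivity
  · positivity

theorem Kn_sq (mu : ℝ) (hmu : 0 ≤ mu) (n : ℕ) (hn : 0 < n) (x : ℝ) (hx : 1 / 2 ≤ x) :
    Kn mu n (fun t => t ^ 2) x
      = x ^ 2
        + (1 / n) * (1 + 2 * mu * eD mu (-(n * rn n x)) / eD mu (n * rn n x)) * x
        - (1 / n ^ 2) * (5 / 12 + mu * eD mu (-(n * rn n x)) / eD mu (n * rn n x)) := by
  have hn0 : (n : ℝ) ≠ 0 := Nat.cast_ne_zero.2 hn.ne'
  have hn0' : (0:ℝ) < n := Nat.cast_pos.2 hn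
  set y : ℝ := n * rn n x with hy_def
  have hy' : y = n * x - 1 / 2 := by
    rw [hy_def, rn]; field_simp
  have hy : 0 ≤ y := by
    rw [hy']
    have : (1:ℝ) / 2 * n ≤ x * n := by
      apply mul_le_mul_of_nonneg_right hx hn0'.le
    have hn1 : (1:ℝ) ≤ n := by exact_mod_cast hn
    nlinarith
  set a : ℕ → ℝ := fun k => (k : ℝ) + 2 * mu * theta k with ha_def
  set f : ℕ → ℝ := fun k => y ^ k / gammaD mu k with hf_def
  set h : ℕ → ℝ := fun k => (-y) ^ k / gammaD mu k with hh_def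
  set g1 : ℕ → ℝ := fun k => a k * f k with hg1_def
  set g2 : ℕ → ℝ := fun k => a k ^ 2 * f k with hg2_def
  have hf : Summable f := summable_eD mu hmu y
  have hh : Summable h := summable_eD mu hmu (-y)
  have ha_pos : ∀ k : ℕ, (0:ℝ) < a (k + 1) := by
    intro k
    have := theta_nonneg (k + 1)
    simp only [ha_def]
    push_cast
    positivity
  have ha0 : a 0 = 0 := by simp [ha_def, theta]
  -- shift identities
  have hg1succ : ∀ j : ℕ, g1 (j + 1) = y * f j := by
    intro j
    have hg : gammaD mu (j + 1) = a (j + 1) * gammaD mu j := by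
      rw [gammaD_succ mu hmu j, ha_def]; push_cast; ring
    simp only [hg1_def, hf_def, hg]
    rw [mul_div_assoc', mul_div_mul_left _ _ (ha_pos j).ne', pow_succ]
    ring
  have ha_succ : ∀ j : ℕ, a (j + 1) = a j + 1 + 2 * mu * (-1) ^ j := by
    intro j
    simp only [ha_def, theta_succ]
    push_cast
    ring
  have hg2succ : ∀ j : ℕ, g2 (j + 1) = y * g1 j + y * f j + 2 * mu * y * h j := by
    intro j
    have h1 : g2 (j + 1) = a (j + 1) * (y * f j) := by
      simp only [hg2_def, pow_two, mul_assoc]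
      rw [← hg1succ j]
    rw [h1, ha_succ j]
    have hpow : (-1 : ℝ) ^ j * f j = h j := by
      have hnp : (-y) ^ j = (-1 : ℝ) ^ j * y ^ j := by
        rw [← neg_one_mul, mul_pow]
      simp only [hf_def, hh_def, hnp]
      ring
    simp only [hg1_def]
    rw [← hpow]
    ring
  -- summability
  have hg1sum : Summable g1 := by
    rw [← summable_nat_add_iff 1]
    simpa only [hg1succ] using hf.mul_left y
  have hhsum' : Summable (fun j => 2 * mu * y * h j) := hh.mul_left _
  have hg2sum : Summable g2 := by
    rw [← summable_nat_add_iff 1]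
    simp only [hg2succ]
    exact ((hg1sum.mul_left y).add (hf.mul_left y)).add hhsum'
  -- tsum values
  have hE : eD mu y = ∑' k, f k := rfl
  have hE' : eD mu (-y) = ∑' k, h k := rfl
  have hS1 : ∑' k, g1 k = y * eD mu y := by
    rw [Summable.tsum_eq_zero_add hg1sum]
    simp only [hg1_def, ha0, zero_mul, zero_add]
    rw [show (∑' (b : ℕ), a (b + 1) * f (b + 1)) = ∑' b, y * f b from tsum_congr hg1succ,
        tsum_mul_left, hE]
  have hS2 : ∑' k, g2 k = y ^ 2 * eD mu y + y * eD mu y + 2 * mu * y * eD mu (-y) := by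
    rw [Summable.tsum_eq_zero_add hg2sum]
    simp only [hg2_def, ha0]
    norm_num
    rw [show (∑' (b : ℕ), a (b + 1) ^ 2 * f (b + 1))
          = ∑' b, (y * g1 b + y * f b + 2 * mu * y * h b) from tsum_congr hg2succ]
    rw [Summable.tsum_add (((hg1sum.mul_left y)).add (hf.mul_left y)) hhsum',
        Summable.tsum_add (hg1sum.mul_left y) (hf.mul_left y),
        tsum_mul_left, tsum_mul_left, tsum_mul_left, hS1, hE, hE']
    ring
  -- positivity of eD
  have he_pos : 0 < eD mu y := by
    have h1 : f 0 = 1 := by simp [hf_def, gammaD_zero mu hmu]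
    have h2 : f 0 ≤ ∑' k, f k :=
      Summable.le_tsum hf 0 (fun j _ => div_nonneg (pow_nonneg hy j) (gammaD_pos mu hmu j).le)
    rw [hE]; linarith [h1 ▸ h2]
  have he_ne : eD mu y ≠ 0 := he_pos.ne'
  -- integral computation
  have hint : ∀ k : ℕ, (∫ t in (((k : ℝ) + 2*mu*theta k)/n)..(((k : ℝ)+1+2*mu*theta k)/n), t^2)
      = (((a k + 1)/(n:ℝ))^3 - ((a k)/(n:ℝ))^3)/3 := by
    intro k
    rw [integral_pow]
    simp only [ha_def]
    norm_num
    ring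
  have hterm : ∀ k : ℕ, f k * ((((a k + 1)/(n:ℝ))^3 - ((a k)/(n:ℝ))^3)/3)
      = (1/(n:ℝ)^3) * (g2 k + g1 k + (1/3) * f k) := by
    intro k
    simp only [hg2_def, hg1_def]
    field_simp
    ring
  have hKn : Kn mu n (fun t => t^2) x
      = ((n:ℝ) / eD mu y) * ∑' k, f k * ((((a k + 1)/(n:ℝ))^3 - ((a k)/(n:ℝ))^3)/3) := by
    rw [Kn, ← hy_def]
    congr 1
    exact tsum_congr fun k => by rw [hint k]
  have hsum : (∑' k, f k * ((((a k + 1)/(n:ℝ))^3 - ((a k)/(n:ℝ))^3)/3))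
      = (1/(n:ℝ)^3) * ((y ^ 2 * eD mu y + y * eD mu y + 2 * mu * y * eD mu (-y))
          + y * eD mu y + (1/3) * eD mu y) := by
    rw [tsum_congr hterm, tsum_mul_left,
        Summable.tsum_add (hg2sum.add hg1sum) (hf.mul_left (1/3)),
        Summable.tsum_add hg2sum hg1sum, tsum_mul_left, hS2, hS1, hE]
  rw [hKn, hsum]
  set E : ℝ := eD mu y with hE_def
  set E' : ℝ := eD mu (-y) with hE'_def
  rw [hy']
  field_simp
  ring
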